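/- (MDI entanglement-witness soundness) In the setting of the soundness identity, suppose additionally that W is an entanglement witness in the sense that tr(W σ) ≥ 0 for every fully separable density matrix σ on ⊗_{j=1}^n ℂ^{d_j}. If ρ is fully separable, then for every choice of shared randomness π(μ) and local POVMs {Ξ^{(j)}_{μ,i}}, the MDI value is nonnegative: Σ_{i_1,…,i_n} Σ_{k_1,…,k_n} β^{i_1…i_n}_{k_1…k_n} P_Eve(i_1,…,i_n | k_1,…,k_n) ≥ 0. -/

import Mathlib

open Matrix BigOperators
open scoped ComplexOrder Kronecker

noncomputable section

/-- A density matrix: positive semidefinite with trace one. -/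
def IsDensity {ι : Type*} [Fintype ι] (ρ : Matrix ι ι ℂ) : Prop :=
  ρ.PosSemidef ∧ ρ.trace = 1

/-- Kronecker (tensor) product of a finite family of matrices. -/
def famKron {J : Type*} [Fintype J] {ι κ : J → Type*}
    (M : ∀ j, Matrix (ι j) (κ j) ℂ) : Matrix (∀ j, ι j) (∀ j, κ j) ℂ :=
  fun a b => ∏ j, M j (a j) (b j)

/-- The maximally entangled state `Φ₊ = (1/d) Σ_{j,k} |jj⟩⟨kk|` on `ℂ^d ⊗ ℂ^d`. -/
def maxEnt (d : ℕ) : Matrix (Fin d × Fin d) (Fin d × Fin d) ℂ :=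
  fun p q => if p.1 = p.2 ∧ q.1 = q.2 then (d : ℂ)⁻¹ else 0

/-- The generalized Bell projector `(I ⊗ U) Φ₊ (I ⊗ U)†`, acting on the pair
(ancilla A', party A), ancilla first. -/
def bellProj {d : ℕ} (U : Matrix (Fin d) (Fin d) ℂ) :
    Matrix (Fin d × Fin d) (Fin d × Fin d) ℂ :=
  ((1 : Matrix (Fin d) (Fin d) ℂ) ⊗ₖ U) * maxEnt d *
    ((1 : Matrix (Fin d) (Fin d) ℂ) ⊗ₖ U)ᴴ

/-- The state on `⊗_j (A'_j ⊗ A_j)` obtained by placing `ρ` on the `A` parts (second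
components) and `⊗_j ω_j` on the ancilla `A'` parts (first components). -/
def assemble {n : ℕ} {d : Fin n → ℕ}
    (ρ : Matrix (∀ j, Fin (d j)) (∀ j, Fin (d j)) ℂ)
    (ω : ∀ j, Matrix (Fin (d j)) (Fin (d j)) ℂ) :
    Matrix (∀ j, Fin (d j) × Fin (d j)) (∀ j, Fin (d j) × Fin (d j)) ℂ :=
  fun p q => (∏ j, ω j (p j).1 (q j).1) * ρ (fun j => (p j).2) (fun j => (q j).2)

/-- Partial trace over all the `A` parts (the second components of the pairs). -/
def ptraceA {n : ℕ} {d : Fin n → ℕ}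
    (M : Matrix (∀ j, Fin (d j) × Fin (d j)) (∀ j, Fin (d j) × Fin (d j)) ℂ) :
    Matrix (∀ j, Fin (d j)) (∀ j, Fin (d j)) ℂ :=
  fun a' b' => ∑ a : ∀ j, Fin (d j), M (fun j => (a' j, a j)) (fun j => (b' j, a j))

/-- `N_{μ;i}`: the matrix on the ancilla (`A'`) parts obtained by partially tracing out
all `A` parts of `(⊗_j Ξ_{μ,i_j}) · (ρ on A, identity on A')`. -/
def NEve {n M : ℕ} {d : Fin n → ℕ}
    (Ξ : Fin M → ∀ j, Fin ((d j) ^ 2) →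
      Matrix (Fin (d j) × Fin (d j)) (Fin (d j) × Fin (d j)) ℂ)
    (ρ : Matrix (∀ j, Fin (d j)) (∀ j, Fin (d j)) ℂ)
    (μ : Fin M) (i : ∀ j, Fin ((d j) ^ 2)) :
    Matrix (∀ j, Fin (d j)) (∀ j, Fin (d j)) ℂ :=
  ptraceA (famKron (fun j => Ξ μ j (i j)) *
    assemble ρ (fun j => (1 : Matrix (Fin (d j)) (Fin (d j)) ℂ)))

/-- The effective state
`ς = Σ_μ π(μ) Σ_i (⊗_j U_{i_j}^*) N_{μ;i} (⊗_j U_{i_j}ᵀ)` produced by Eve. -/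
def sigmaEve {n M : ℕ} {d : Fin n → ℕ} (π : Fin M → ℝ)
    (Ξ : Fin M → ∀ j, Fin ((d j) ^ 2) →
      Matrix (Fin (d j) × Fin (d j)) (Fin (d j) × Fin (d j)) ℂ)
    (U : ∀ j, Fin ((d j) ^ 2) → Matrix (Fin (d j)) (Fin (d j)) ℂ)
    (ρ : Matrix (∀ j, Fin (d j)) (∀ j, Fin (d j)) ℂ) :
    Matrix (∀ j, Fin (d j)) (∀ j, Fin (d j)) ℂ :=
  ∑ μ, (π μ : ℂ) • ∑ i : ∀ j, Fin ((d j) ^ 2),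
    famKron (fun j => ((U j (i j))ᵀ)ᴴ) * NEve Ξ ρ μ i *
      famKron (fun j => (U j (i j))ᵀ)

/-- Full separability of an `n`-partite state. -/
def FullySeparable {n : ℕ} {d : Fin n → ℕ}
    (ρ : Matrix (∀ j, Fin (d j)) (∀ j, Fin (d j)) ℂ) : Prop :=
  ∃ (M : ℕ) (w : Fin M → ℝ)
    (σ : Fin M → ∀ j, Matrix (Fin (d j)) (Fin (d j)) ℂ),
    (∀ m, 0 ≤ w m) ∧ (∑ m, w m = 1) ∧
    (∀ m j, IsDensity (σ m j)) ∧
    ρ = ∑ m, (w m : ℂ) • famKron (σ m)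

section PsdSqrtPort
open scoped MatrixOrder

def Matrix.PosSemidef.sqrt {ν : Type*} [Fintype ν] [DecidableEq ν] {A : Matrix ν ν ℂ}
    (_ : A.PosSemidef) : Matrix ν ν ℂ :=
  CFC.sqrt A

lemma Matrix.PosSemidef.sqrt_mul_self {ν : Type*} [Fintype ν] [DecidableEq ν]
    {A : Matrix ν ν ℂ} (hA : A.PosSemidef) : hA.sqrt * hA.sqrt = A :=
  CFC.sqrt_mul_sqrt_self A hA.nonneg

lemma Matrix.PosSemidef.posSemidef_sqrt {ν : Type*} [Fintype ν] [DecidableEq ν]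
    {A : Matrix ν ν ℂ} (hA : A.PosSemidef) : hA.sqrt.PosSemidef :=
  (CFC.sqrt_nonneg A).posSemidef

lemma Matrix.posSemidef_iff_eq_transpose_mul_self {ν : Type*} [Fintype ν] [DecidableEq ν]
    {A : Matrix ν ν ℂ} : A.PosSemidef ↔ ∃ B : Matrix ν ν ℂ, A = Bᴴ * B := by
  constructor
  · intro hA
    refine ⟨hA.sqrt, ?_⟩
    rw [hA.posSemidef_sqrt.1.eq, hA.sqrt_mul_self]
  · rintro ⟨B, rfl⟩
    exact Matrix.posSemidef_conjTranspose_mul_self B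

end PsdSqrtPort

namespace MDIAux

/-! ### Positive semidefinite helper lemmas -/

lemma psd_diag_nonneg {ι : Type*} [Fintype ι] [DecidableEq ι] {A : Matrix ι ι ℂ}
    (hA : A.PosSemidef) (i : ι) : 0 ≤ A i i := by
  exact hA.diag_nonneg

lemma psd_trace_nonneg {ι : Type*} [Fintype ι] [DecidableEq ι] {A : Matrix ι ι ℂ}
    (hA : A.PosSemidef) : 0 ≤ A.trace :=
  Finset.sum_nonneg fun i _ => psd_diag_nonneg hA i

lemma psd_trace_real {ι : Type*} [Fintype ι] [DecidableEq ι] {A : Matrix ι ι ℂ}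
    (hA : A.PosSemidef) : ∃ r : ℝ, 0 ≤ r ∧ A.trace = (r : ℂ) := by
  have h := psd_trace_nonneg hA
  rw [Complex.le_def] at h
  exact ⟨A.trace.re, by simpa using h.1, by apply Complex.ext <;> simp [← h.2]⟩

lemma psd_trace_eq_zero {ι : Type*} [Fintype ι] [DecidableEq ι] {A : Matrix ι ι ℂ}
    (hA : A.PosSemidef) (h : A.trace = 0) : A = 0 := by
  obtain ⟨B, rfl⟩ := Matrix.posSemidef_iff_eq_transpose_mul_self.mp hA
  rw [Matrix.conjTranspose_mul_self_eq_zero (A := B)]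
  have hdiag : ∀ j, (Bᴴ * B) j j = 0 := by
    intro j
    have h0 : ∀ k, 0 ≤ (Bᴴ * B) k k := fun k => psd_diag_nonneg hA k
    have := (Finset.sum_eq_zero_iff_of_nonneg (fun k _ => h0 k)).mp h
    exact this j (Finset.mem_univ j)
  have hv : ∀ j, (star (fun i => B i j)) ⬝ᵥ (fun i => B i j) = 0 := by
    intro j
    have := hdiag j
    simpa [Matrix.mul_apply, Matrix.conjTranspose_apply, dotProduct] using this
  ext i j
  have := dotProduct_star_self_eq_zero.mp (hv j)
  simpa using congrFun this i

lemma psd_smul_real {ι : Type*} [Fintype ι] {A : Matrix ι ι ℂ}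
    (hA : A.PosSemidef) {c : ℝ} (hc : 0 ≤ c) : ((c : ℂ) • A).PosSemidef := by
  constructor
  · have : ((c : ℂ) • A)ᴴ = star (c : ℂ) • Aᴴ := Matrix.conjTranspose_smul _ _
    rw [Matrix.IsHermitian, this, hA.1.eq, Complex.star_def, Complex.conj_ofReal]
  · intro x
    exact (hA.smul (Complex.zero_le_real.mpr hc)).2 x

/-! ### famKron algebra -/

variable {J : Type*} [Fintype J] [DecidableEq J] {ι κ σ : J → Type*}
  [∀ j, Fintype (ι j)] [∀ j, Fintype (κ j)] [∀ j, Fintype (σ j)]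

lemma famKron_mul (A : ∀ j, Matrix (ι j) (κ j) ℂ) (B : ∀ j, Matrix (κ j) (σ j) ℂ) :
    famKron A * famKron B = famKron (fun j => A j * B j) := by
  ext a c
  simp only [Matrix.mul_apply, famKron]
  rw [Fintype.prod_sum]
  exact Finset.sum_congr rfl fun x _ => Finset.prod_mul_distrib.symm

lemma trace_famKron (A : ∀ j, Matrix (ι j) (ι j) ℂ) :
    (famKron A).trace = ∏ j, (A j).trace := by
  simp only [Matrix.trace, Matrix.diag, famKron]
  rw [Fintype.prod_sum]

lemma famKron_conjTranspose (A : ∀ j, Matrix (ι j) (κ j) ℂ) :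
    (famKron A)ᴴ = famKron (fun j => (A j)ᴴ) := by
  ext a b
  simp [famKron, Matrix.conjTranspose_apply, map_prod]

lemma famKron_smul (c : J → ℂ) (A : ∀ j, Matrix (ι j) (κ j) ℂ) :
    famKron (fun j => c j • A j) = (∏ j, c j) • famKron A := by
  ext a b
  simp [famKron, Finset.prod_mul_distrib, mul_comm]

lemma famKron_posSemidef (A : ∀ j, Matrix (ι j) (ι j) ℂ) [∀ j, DecidableEq (ι j)]
    (hA : ∀ j, (A j).PosSemidef) : (famKron A).PosSemidef := by
  have h : ∀ j, ∃ B : Matrix (ι j) (ι j) ℂ, A j = Bᴴ * B := fun j =>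
    Matrix.posSemidef_iff_eq_transpose_mul_self.mp (hA j)
  choose B hB using h
  have : famKron A = (famKron B)ᴴ * famKron B := by
    rw [famKron_conjTranspose, famKron_mul]
    exact congrArg famKron (funext hB)
  rw [this]
  exact Matrix.posSemidef_conjTranspose_mul_self _

lemma famKron_zero_of_factor (A : ∀ j, Matrix (ι j) (κ j) ℂ) (j0 : J) (h : A j0 = 0) :
    famKron A = 0 := by
  ext a b
  simp only [famKron, Matrix.zero_apply]
  exact Finset.prod_eq_zero (Finset.mem_univ j0) (by simp [h])

/-! ### Single-party partial trace object -/

variable {d : ℕ}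

/-- `L_{a'b'} = Σ_{a,b} Ξ_{(a'a),(b'b)} σ_{ba}` -/
def Lm (Ξ : Matrix (Fin d × Fin d) (Fin d × Fin d) ℂ) (σ : Matrix (Fin d) (Fin d) ℂ) :
    Matrix (Fin d) (Fin d) ℂ :=
  fun a' b' => ∑ a, ∑ b, Ξ (a', a) (b', b) * σ b a

def Am (C : Matrix (Fin d) (Fin d) ℂ) (t : Fin d) : Matrix (Fin d) (Fin d × Fin d) ℂ :=
  Matrix.of fun a' p => if p.1 = a' then C t p.2 else 0

lemma AmXiAm (C : Matrix (Fin d) (Fin d) ℂ) (t : Fin d)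
    (Ξ : Matrix (Fin d × Fin d) (Fin d × Fin d) ℂ) (a' b' : Fin d) :
    (Am C t * Ξ * (Am C t)ᴴ) a' b' = ∑ a, ∑ b, C t a * Ξ (a', a) (b', b) * star (C t b) := by
  simp only [Matrix.mul_apply, Matrix.conjTranspose_apply, Am, Matrix.of_apply,
    Fintype.sum_prod_type, ite_mul, zero_mul, mul_ite, mul_zero,
    apply_ite (star : ℂ → ℂ), star_zero, Finset.sum_ite_eq, Finset.sum_ite_eq',
    Finset.mem_univ, if_true, Finset.sum_mul, Finset.sum_ite_irrel, Finset.sum_const_zero]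
  exact Finset.sum_comm

lemma Lm_eq_sum (Ξ : Matrix (Fin d × Fin d) (Fin d × Fin d) ℂ)
    {σ : Matrix (Fin d) (Fin d) ℂ} (hσ : σ.PosSemidef) :
    Lm Ξ σ = ∑ t : Fin d, Am hσ.sqrt t * Ξ * (Am hσ.sqrt t)ᴴ := by
  have hC : hσ.sqrt * hσ.sqrt = σ := hσ.sqrt_mul_self
  have hCh : hσ.sqrt.IsHermitian := hσ.posSemidef_sqrt.1
  have hσCC : ∀ b a : Fin d, σ b a = ∑ t, star (hσ.sqrt t b) * hσ.sqrt t a := by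
    intro b a
    calc σ b a = (hσ.sqrt * hσ.sqrt) b a := by rw [hC]
    _ = ∑ t, star (hσ.sqrt t b) * hσ.sqrt t a := by
        rw [Matrix.mul_apply]
        refine Finset.sum_congr rfl fun t _ => ?_
        rw [← Matrix.conjTranspose_apply, hCh.eq]
  ext a' b'
  simp only [Matrix.sum_apply, AmXiAm, Lm, hσCC]
  conv_rhs => rw [Finset.sum_comm]
  refine Finset.sum_congr rfl fun a _ => ?_
  simp only [Finset.mul_sum]
  conv_rhs => rw [Finset.sum_comm]
  refine Finset.sum_congr rfl fun b _ => ?_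
  refine Finset.sum_congr rfl fun t _ => ?_
  ring

lemma Lm_posSemidef {Ξ : Matrix (Fin d × Fin d) (Fin d × Fin d) ℂ}
    {σ : Matrix (Fin d) (Fin d) ℂ} (hΞ : Ξ.PosSemidef) (hσ : σ.PosSemidef) :
    (Lm Ξ σ).PosSemidef := by
  rw [Lm_eq_sum Ξ hσ]
  refine Finset.sum_induction _ Matrix.PosSemidef
    (fun A B hA hB => hA.add hB) Matrix.PosSemidef.zero
    (fun t _ => hΞ.mul_mul_conjTranspose_same _)

lemma trace_Xi_kron (Ξ : Matrix (Fin d × Fin d) (Fin d × Fin d) ℂ)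
    (τ σ : Matrix (Fin d) (Fin d) ℂ) :
    (Ξ * ((τ)ᵀ ⊗ₖ σ)).trace = (τ * (Lm Ξ σ)ᵀ).trace := by
  simp only [Matrix.trace, Matrix.diag, Matrix.mul_apply, Lm, Matrix.transpose_apply,
    Matrix.kroneckerMap_apply, Fintype.sum_prod_type]
  refine Finset.sum_congr rfl fun a' _ => ?_
  simp only [Finset.mul_sum]
  rw [Finset.sum_comm]
  refine Finset.sum_congr rfl fun b' _ => ?_
  refine Finset.sum_congr rfl fun a _ => ?_
  refine Finset.sum_congr rfl fun b _ => ?_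
  ring

lemma trace_conj (U τ L : Matrix (Fin d) (Fin d) ℂ) (hU : Uᴴ * U = 1) :
    (τ * L).trace = ((U * τ * Uᴴ) * (U * L * Uᴴ)).trace := by
  have h1 : (U * τ * Uᴴ) * (U * L * Uᴴ) = U * (τ * L) * Uᴴ := by
    simp only [Matrix.mul_assoc]
    rw [← Matrix.mul_assoc Uᴴ U, hU, Matrix.one_mul]
  rw [h1, Matrix.trace_mul_cycle, ← Matrix.mul_assoc, hU, Matrix.one_mul]

/-! ### assemble lemmas -/

lemma assemble_sum_smul {n m : ℕ} {d : Fin n → ℕ} (c : Fin m → ℂ)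
    (R : Fin m → Matrix (∀ j, Fin (d j)) (∀ j, Fin (d j)) ℂ)
    (ω : ∀ j, Matrix (Fin (d j)) (Fin (d j)) ℂ) :
    assemble (∑ m, c m • R m) ω = ∑ m, c m • assemble (R m) ω := by
  ext p q
  simp only [assemble, Matrix.sum_apply, Matrix.smul_apply, smul_eq_mul, Finset.mul_sum]
  exact Finset.sum_congr rfl fun m _ => by ring

lemma assemble_famKron {n : ℕ} {d : Fin n → ℕ}
    (σ ω : ∀ j, Matrix (Fin (d j)) (Fin (d j)) ℂ) :
    assemble (famKron σ) ω = famKron (fun j => (ω j) ⊗ₖ (σ j)) := by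
  ext p q
  simp [assemble, famKron, Matrix.kroneckerMap_apply, Finset.prod_mul_distrib]

/-- Key positivity: a witness is nonnegative against any (subnormalized) product of
positive semidefinite factors. -/
lemma key_pos {n : ℕ} {d : Fin n → ℕ}
    (W : Matrix (∀ j, Fin (d j)) (∀ j, Fin (d j)) ℂ)
    (hWitness : ∀ σ : Matrix (∀ j, Fin (d j)) (∀ j, Fin (d j)) ℂ,
      FullySeparable σ → 0 ≤ (W * σ).trace)
    (S : ∀ j, Matrix (Fin (d j)) (Fin (d j)) ℂ) (hS : ∀ j, (S j).PosSemidef) :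
    0 ≤ (W * famKron S).trace := by
  have hr : ∀ j, ∃ r : ℝ, 0 ≤ r ∧ (S j).trace = (r : ℂ) := fun j => psd_trace_real (hS j)
  choose r hr0 htr using hr
  by_cases hz : ∀ j, r j ≠ 0
  · -- normalize
    have hcast : ∀ j, (r j : ℂ) ≠ 0 := fun j => by
      exact_mod_cast hz j
    have hdens : ∀ j, IsDensity (((r j : ℂ))⁻¹ • S j) := by
      intro j
      refine ⟨?_, ?_⟩
      · have h2 : ((r j : ℂ))⁻¹ • S j = ((((r j)⁻¹ : ℝ) : ℂ)) • S j := by norm_cast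
        rw [h2]
        exact psd_smul_real (hS j) (inv_nonneg.mpr (hr0 j))
      · rw [Matrix.trace_smul, htr j, smul_eq_mul, inv_mul_cancel₀ (hcast j)]
    have hsep : FullySeparable (famKron (fun j => ((r j : ℂ))⁻¹ • S j)) := by
      refine ⟨1, fun _ => 1, fun _ => fun j => ((r j : ℂ))⁻¹ • S j, fun _ => zero_le_one,
        by simp, fun _ j => hdens j, ?_⟩
      simp
    have hfam : famKron S
        = (∏ j, (r j : ℂ)) • famKron (fun j => ((r j : ℂ))⁻¹ • S j) := by
      have h1 : S = fun j => (r j : ℂ) • (((r j : ℂ))⁻¹ • S j) := by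
        funext j
        rw [smul_smul, mul_inv_cancel₀ (hcast j), one_smul]
      calc famKron S = famKron (fun j => (r j : ℂ) • (((r j : ℂ))⁻¹ • S j)) := by rw [← h1]
        _ = _ := famKron_smul _ _
    rw [hfam, Matrix.mul_smul, Matrix.trace_smul, smul_eq_mul]
    refine mul_nonneg ?_ (hWitness _ hsep)
    rw [← Complex.ofReal_prod]
    exact Complex.zero_le_real.mpr (Finset.prod_nonneg fun j _ => hr0 j)
  · push_neg at hz
    obtain ⟨j0, hj0⟩ := hz
    have hS0 : S j0 = 0 := psd_trace_eq_zero (hS j0) (by rw [htr j0, hj0]; simp)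
    rw [famKron_zero_of_factor S j0 hS0, Matrix.mul_zero, Matrix.trace_zero]

end MDIAux

/-- MDI entanglement-witness soundness: if `tr(Wσ) ≥ 0` for every fully separable state
`σ` and `ρ` is fully separable, then for every manipulation by Eve the MDI value is
nonnegative. -/
theorem mdi_ew_soundness
    {n M : ℕ} (d : Fin n → ℕ)
    (U : ∀ j, Fin ((d j) ^ 2) → Matrix (Fin (d j)) (Fin (d j)) ℂ)
    (hU : ∀ j i, (U j i)ᴴ * U j i = 1)
    (horth : ∀ j i i', ((U j i)ᴴ * U j i').trace = if i = i' then (d j : ℂ) else 0)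
    (ρ : Matrix (∀ j, Fin (d j)) (∀ j, Fin (d j)) ℂ) (hρ : IsDensity ρ)
    (hρsep : FullySeparable ρ)
    (W : Matrix (∀ j, Fin (d j)) (∀ j, Fin (d j)) ℂ) (hW : W.IsHermitian)
    (hWitness : ∀ σ : Matrix (∀ j, Fin (d j)) (∀ j, Fin (d j)) ℂ,
      FullySeparable σ → 0 ≤ (W * σ).trace)
    (τ : ∀ j, Fin ((d j) ^ 2) → Matrix (Fin (d j)) (Fin (d j)) ℂ)
    (hτ : ∀ j k, IsDensity (τ j k))
    (β : (∀ j, Fin ((d j) ^ 2)) → (∀ j, Fin ((d j) ^ 2)) → ℝ)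
    (hdecomp : ∀ i, W = ∑ k : ∀ j, Fin ((d j) ^ 2),
      (β i k : ℂ) • famKron (fun j => U j (i j) * τ j (k j) * (U j (i j))ᴴ))
    (π : Fin M → ℝ) (hπ0 : ∀ μ, 0 ≤ π μ) (hπ1 : ∑ μ, π μ = 1)
    (Ξ : Fin M → ∀ j, Fin ((d j) ^ 2) →
      Matrix (Fin (d j) × Fin (d j)) (Fin (d j) × Fin (d j)) ℂ)
    (hΞpos : ∀ μ j i, (Ξ μ j i).PosSemidef)
    (hΞsum : ∀ μ j, ∑ i, Ξ μ j i = 1) :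
    0 ≤ ∑ i : ∀ j, Fin ((d j) ^ 2), ∑ k : ∀ j, Fin ((d j) ^ 2),
      (β i k : ℂ) *
        ((∑ μ, (π μ : ℂ) • famKron (fun j => Ξ μ j (i j))) *
          assemble ρ (fun j => (τ j (k j))ᵀ)).trace := by
  
  classical
  obtain ⟨Ms, w, σs, hw0, hw1, hσd, hρeq⟩ := hρsep
  -- the local positive semidefinite factors produced by Eve's measurement
  have hSpsd : ∀ (μ : Fin M) (m : Fin Ms) (i : ∀ j, Fin ((d j) ^ 2)) (j : Fin n),
      (U j (i j) * (MDIAux.Lm (Ξ μ j (i j)) (σs m j))ᵀ * (U j (i j))ᴴ).PosSemidef :=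
    fun μ m i j =>
      ((MDIAux.Lm_posSemidef (hΞpos μ j (i j)) (hσd m j).1).transpose).mul_mul_conjTranspose_same _
  -- expansion of the Eve trace for fixed (i, k)
  have hexp : ∀ (i k : ∀ j, Fin ((d j) ^ 2)),
      ((∑ μ, (π μ : ℂ) • famKron (fun j => Ξ μ j (i j))) *
        assemble ρ (fun j => (τ j (k j))ᵀ)).trace
      = ∑ μ, ∑ m, (π μ : ℂ) * ((w m : ℂ) *
          ((famKron fun j => U j (i j) * τ j (k j) * (U j (i j))ᴴ) *
            famKron (fun j => U j (i j) * (MDIAux.Lm (Ξ μ j (i j)) (σs m j))ᵀ * (U j (i j))ᴴ)).trace) := by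
    intro i k
    rw [hρeq, MDIAux.assemble_sum_smul, Finset.sum_mul, Matrix.trace_sum]
    refine Finset.sum_congr rfl fun μ _ => ?_
    rw [Matrix.smul_mul, Matrix.trace_smul, smul_eq_mul, Matrix.mul_sum, Matrix.trace_sum,
      Finset.mul_sum]
    refine Finset.sum_congr rfl fun m _ => ?_
    rw [Matrix.mul_smul, Matrix.trace_smul, smul_eq_mul]
    congr 2
    rw [MDIAux.assemble_famKron, MDIAux.famKron_mul, MDIAux.trace_famKron]
    have hfac : ∀ j : Fin n, (Ξ μ j (i j) * ((τ j (k j))ᵀ ⊗ₖ σs m j)).trace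
        = ((U j (i j) * τ j (k j) * (U j (i j))ᴴ) *
           (U j (i j) * (MDIAux.Lm (Ξ μ j (i j)) (σs m j))ᵀ * (U j (i j))ᴴ)).trace := by
      intro j
      rw [MDIAux.trace_Xi_kron, MDIAux.trace_conj _ _ _ (hU j (i j))]
    rw [Finset.prod_congr rfl fun j _ => hfac j, MDIAux.famKron_mul, MDIAux.trace_famKron]
  -- witness decomposition: collapse the k-sum into tr(W ⊗ S)
  have hWtr : ∀ (i : ∀ j, Fin ((d j) ^ 2))
      (S : ∀ j, Matrix (Fin (d j)) (Fin (d j)) ℂ),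
      (W * famKron S).trace = ∑ k : ∀ j, Fin ((d j) ^ 2), (β i k : ℂ) *
        ((famKron fun j => U j (i j) * τ j (k j) * (U j (i j))ᴴ) * famKron S).trace := by
    intro i S
    conv_lhs => rw [hdecomp i]
    rw [Finset.sum_mul, Matrix.trace_sum]
    exact Finset.sum_congr rfl fun k _ => by
      rw [Matrix.smul_mul, Matrix.trace_smul, smul_eq_mul]
  -- rewrite the whole objective
  have hmain : (∑ i : ∀ j, Fin ((d j) ^ 2), ∑ k : ∀ j, Fin ((d j) ^ 2),
      (β i k : ℂ) *
        ((∑ μ, (π μ : ℂ) • famKron (fun j => Ξ μ j (i j))) *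
          assemble ρ (fun j => (τ j (k j))ᵀ)).trace)
      = ∑ i : ∀ j, Fin ((d j) ^ 2), ∑ μ, ∑ m, (π μ : ℂ) * ((w m : ℂ) *
          (W * famKron (fun j =>
            U j (i j) * (MDIAux.Lm (Ξ μ j (i j)) (σs m j))ᵀ * (U j (i j))ᴴ)).trace) := by
    refine Finset.sum_congr rfl fun i _ => ?_
    simp only [hexp i, Finset.mul_sum]
    rw [Finset.sum_comm]
    refine Finset.sum_congr rfl fun μ _ => ?_
    rw [Finset.sum_comm]
    refine Finset.sum_congr rfl fun m _ => ?_
    rw [hWtr i, Finset.mul_sum, Finset.mul_sum]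
    refine Finset.sum_congr rfl fun k _ => ?_
    ring
  rw [hmain]
  refine Finset.sum_nonneg fun i _ => Finset.sum_nonneg fun μ _ => Finset.sum_nonneg fun m _ => ?_
  refine mul_nonneg (Complex.zero_le_real.mpr (hπ0 μ)) ?_
  refine mul_nonneg (Complex.zero_le_real.mpr (hw0 m)) ?_
  exact MDIAux.key_pos W hWitness _ (hSpsd μ m i)
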